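/- Let d ≥ 2 be an integer, d′ = d/(d−1), A = [a_{i_1,…,i_d}] a d-fold array of real numbers indexed by {1,…,n}^d, and let ξ = (ξ_1, …, ξ_n) be a random vector with ‖ξ‖_{E_d} < ∞. Then S_d(ξ) has finite ψ_1-norm and ‖S_d(ξ)‖_{ψ_1} ≤ ‖A‖_{d′} · ‖ξ‖_{E_d}^d. -/

import Mathlib

open MeasureTheory ENNReal

/-- The Luxemburg (ψ_1) norm of a real random variable:
`‖η‖_{ψ_1} = inf{K > 0 : E exp(|η/K|) ≤ 2}` (with value `∞` if no such `K` exists). -/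
noncomputable def psi1Norm {Ω : Type*} [MeasurableSpace Ω] (μ : Measure Ω)
    (η : Ω → ℝ) : ℝ≥0∞ :=
  ⨅ (K : ℝ) (_ : 0 < K)
    (_ : ∫⁻ ω, ENNReal.ofReal (Real.exp (|η ω / K|)) ∂μ ≤ 2), ENNReal.ofReal K

/-- `‖ξ‖_{E_p} = inf{K > 0 : E exp(∑_i |ξ_i|^p / K^p) ≤ 2}`
(with value `∞` if no such `K` exists). -/
noncomputable def epNorm {Ω : Type*} [MeasurableSpace Ω] {n : ℕ} (μ : Measure Ω) (p : ℝ)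
    (ξ : Fin n → Ω → ℝ) : ℝ≥0∞ :=
  ⨅ (K : ℝ) (_ : 0 < K)
    (_ : ∫⁻ ω, ENNReal.ofReal (Real.exp ((∑ i, |ξ i ω| ^ p) / K ^ p)) ∂μ ≤ 2),
    ENNReal.ofReal K

lemma chaos_abs_le (d n : ℕ) (hd : 2 ≤ d) (A : (Fin d → Fin n) → ℝ) (x : Fin n → ℝ) :
    |∑ i : Fin d → Fin n, A i * ∏ k, x (i k)| ≤
      (∑ i : Fin d → Fin n, |A i| ^ ((d : ℝ) / ((d : ℝ) - 1))) ^ (((d : ℝ) - 1) / (d : ℝ)) *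
        ∑ j, |x j| ^ (d : ℕ) := by
  have hd1 : (1 : ℝ) < d := by
    have : (2:ℝ) ≤ d := by exact_mod_cast hd
    linarith
  have hd0 : (0:ℝ) < d := by linarith
  have hconj : Real.HolderConjugate ((d : ℝ) / ((d : ℝ) - 1)) d := by
    rw [Real.holderConjugate_iff]
    constructor
    · rw [one_lt_div (by linarith)]; linarith
    · field_simp
      ring
  have habs : |∑ i : Fin d → Fin n, A i * ∏ k, x (i k)| ≤
      ∑ i : Fin d → Fin n, |A i| * ∏ k, |x (i k)| := by
    refine (Finset.abs_sum_le_sum_abs _ _).trans ?_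
    refine Finset.sum_le_sum fun i _ => ?_
    rw [abs_mul, Finset.abs_prod]
  refine habs.trans ?_
  have hholder := Real.inner_le_Lp_mul_Lq (Finset.univ)
    (fun i : Fin d → Fin n => |A i|) (fun i : Fin d → Fin n => ∏ k, |x (i k)|) hconj
  simp only [abs_abs] at hholder
  refine hholder.trans ?_
  have h1 : (1 : ℝ) / ((d : ℝ) / ((d : ℝ) - 1)) = ((d : ℝ) - 1) / d := one_div_div _ _
  have e2 : ∑ i : Fin d → Fin n, (abs (∏ k, |x (i k)|)) ^ (d : ℝ)
      = (∑ j, |x j| ^ (d : ℕ)) ^ (d : ℕ) := by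
    rw [Finset.sum_pow' Finset.univ (fun j => |x j| ^ (d:ℕ)) d]
    rw [Fintype.piFinset_univ]
    refine Finset.sum_congr rfl fun i _ => ?_
    rw [abs_of_nonneg (Finset.prod_nonneg fun k _ => abs_nonneg _),
      Real.rpow_natCast, Finset.prod_pow]
  rw [e2, h1]
  have hT : (0:ℝ) ≤ ∑ j, |x j| ^ (d : ℕ) :=
    Finset.sum_nonneg fun j _ => pow_nonneg (abs_nonneg _) _
  have e3 : ((∑ j, |x j| ^ (d : ℕ)) ^ (d : ℕ)) ^ ((1:ℝ)/d) = ∑ j, |x j| ^ (d : ℕ) := by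
    rw [← Real.rpow_natCast (∑ j, |x j| ^ (d : ℕ)) d, ← Real.rpow_mul hT,
      mul_one_div, div_self (ne_of_gt hd0), Real.rpow_one]
  rw [e3]

/-- For an integer `d ≥ 2`, `d′ = d/(d-1)`, a `d`-fold array `A` and a
random vector `ξ` with `‖ξ‖_{E_d} < ∞`, the chaos `S_d(ξ)` has finite ψ_1-norm and
`‖S_d(ξ)‖_{ψ_1} ≤ ‖A‖_{d′} ‖ξ‖_{E_d}^d`. -/
theorem psi1Norm_chaos_le {Ω : Type*} [MeasurableSpace Ω] (μ : Measure Ω)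
    [IsProbabilityMeasure μ] (d n : ℕ) (hd : 2 ≤ d)
    (A : (Fin d → Fin n) → ℝ) (ξ : Fin n → Ω → ℝ) (hmeas : ∀ i, Measurable (ξ i))
    (hfin : epNorm μ (d : ℝ) ξ < ⊤) :
    psi1Norm μ (fun ω => ∑ i : Fin d → Fin n, A i * ∏ k, ξ (i k) ω) < ⊤ ∧
    psi1Norm μ (fun ω => ∑ i : Fin d → Fin n, A i * ∏ k, ξ (i k) ω) ≤
      ENNReal.ofReal ((∑ i : Fin d → Fin n, |A i| ^ ((d : ℝ) / ((d : ℝ) - 1)))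
          ^ (((d : ℝ) - 1) / (d : ℝ))) *
        (epNorm μ (d : ℝ) ξ) ^ d := by
  classical
  have hd1 : (1 : ℝ) < d := by
    have : (2:ℝ) ≤ d := by exact_mod_cast hd
    linarith
  have hd0 : (0:ℝ) < d := by linarith
  set S : Ω → ℝ := fun ω => ∑ i : Fin d → Fin n, A i * ∏ k, ξ (i k) ω with hS
  set C : ℝ := (∑ i : Fin d → Fin n, |A i| ^ ((d : ℝ) / ((d : ℝ) - 1)))
      ^ (((d : ℝ) - 1) / (d : ℝ)) with hC
  have hsum0 : 0 ≤ ∑ i : Fin d → Fin n, |A i| ^ ((d : ℝ) / ((d : ℝ) - 1)) :=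
    Finset.sum_nonneg fun i _ => Real.rpow_nonneg (abs_nonneg _) _
  have hC0 : 0 ≤ C := Real.rpow_nonneg hsum0 _
  rcases eq_or_lt_of_le hC0 with hCz | hCpos
  · -- C = 0 : all A i vanish, S ≡ 0
    have hsum : ∑ i : Fin d → Fin n, |A i| ^ ((d : ℝ) / ((d : ℝ) - 1)) = 0 := by
      have := hCz.symm
      rw [hC, Real.rpow_eq_zero hsum0 (ne_of_gt (div_pos (by linarith) hd0))] at this
      exact this
    have hA : ∀ i : Fin d → Fin n, A i = 0 := by
      intro i
      have h := (Finset.sum_eq_zero_iff_of_nonneg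
        (fun i _ => Real.rpow_nonneg (abs_nonneg _) _)).1 hsum i (Finset.mem_univ i)
      have := (Real.rpow_eq_zero (abs_nonneg _) (ne_of_gt (div_pos hd0 (by linarith)))).1 h
      exact abs_eq_zero.1 this
    have hS0 : S = fun _ => (0:ℝ) := by
      funext ω
      exact Finset.sum_eq_zero fun i _ => by rw [hA i, zero_mul]
    have hpsi : psi1Norm μ S = 0 := by
      refine le_antisymm ?_ zero_le
      refine ENNReal.le_of_forall_pos_le_add fun ε hε _ => ?_
      rw [zero_add, ← ENNReal.ofReal_coe_nnreal]
      have hεR : (0:ℝ) < ε := hε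
      refine iInf_le_of_le (ε : ℝ) (iInf_le_of_le hεR (iInf_le_of_le ?_ le_rfl))
      simp only [hS0, zero_div, abs_zero, Real.exp_zero, ENNReal.ofReal_one,
        lintegral_one, measure_univ]
      exact one_le_two
    rw [hpsi]
    exact ⟨ENNReal.zero_lt_top, zero_le⟩
  · -- C > 0
    have key : ∀ K : ℝ, 0 < K →
        (∫⁻ ω, ENNReal.ofReal (Real.exp ((∑ i, |ξ i ω| ^ (d:ℝ)) / K ^ (d:ℝ))) ∂μ ≤ 2) →
        psi1Norm μ S ≤ ENNReal.ofReal (C * K ^ d) := by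
      intro K hK hcond
      have hCK : 0 < C * K ^ d := by positivity
      refine iInf_le_of_le (C * K ^ d) (iInf_le_of_le hCK (iInf_le_of_le ?_ le_rfl))
      refine le_trans (lintegral_mono fun ω => ?_) hcond
      refine ENNReal.ofReal_le_ofReal (Real.exp_le_exp.mpr ?_)
      have hb : |S ω| ≤ C * ∑ j, |ξ j ω| ^ (d:ℕ) := chaos_abs_le d n hd A (fun j => ξ j ω)
      have hrp : ∀ j, |ξ j ω| ^ (d:ℝ) = |ξ j ω| ^ (d:ℕ) := fun j => Real.rpow_natCast _ d
      have hrpK : K ^ (d:ℝ) = K ^ (d:ℕ) := Real.rpow_natCast _ d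
      rw [abs_div, abs_of_pos hCK]
      simp only [hrp, hrpK]
      calc |S ω| / (C * K ^ d)
          ≤ (C * ∑ j, |ξ j ω| ^ (d:ℕ)) / (C * K ^ d) := by gcongr
        _ = (∑ j, |ξ j ω| ^ (d:ℕ)) / K ^ d := mul_div_mul_left _ _ (ne_of_gt hCpos)
    have hne : epNorm μ (d:ℝ) ξ ≠ ⊤ := hfin.ne
    set e : ℝ := (epNorm μ (d:ℝ) ξ).toReal with he
    have he0 : 0 ≤ e := ENNReal.toReal_nonneg
    have heq : epNorm μ (d:ℝ) ξ = ENNReal.ofReal e := (ENNReal.ofReal_toReal hne).symm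
    have hrhs : ENNReal.ofReal C * (epNorm μ (d:ℝ) ξ) ^ d = ENNReal.ofReal (C * e ^ d) := by
      rw [heq, ← ENNReal.ofReal_pow he0, ← ENNReal.ofReal_mul hC0]
    have hle : psi1Norm μ S ≤ ENNReal.ofReal C * (epNorm μ (d:ℝ) ξ) ^ d := by
      rw [hrhs]
      refine ENNReal.le_of_forall_pos_le_add fun ε hε _ => ?_
      have hεR : (0:ℝ) < ε := hε
      have hcont : Filter.Tendsto (fun x : ℝ => C * x ^ d) (nhds e) (nhds (C * e ^ d)) :=
        ((continuous_const.mul (continuous_pow d)).tendsto e)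
      have hev : ∀ᶠ x in nhds e, C * x ^ d < C * e ^ d + ε :=
        hcont.eventually_lt_const (by linarith)
      obtain ⟨δ, hδ, hδ'⟩ := Metric.eventually_nhds_iff.mp hev
      have hlt : epNorm μ (d:ℝ) ξ < ENNReal.ofReal (e + δ/2) := by
        rw [heq]
        exact (ENNReal.ofReal_lt_ofReal_iff (by linarith)).mpr (by linarith)
      rw [epNorm] at hlt
      simp only [iInf_lt_iff] at hlt
      obtain ⟨K, hK, hKc, hKlt⟩ := hlt
      have hKe : K < e + δ/2 := by
        by_contra h
        push_neg at h
        exact absurd hKlt (not_lt.mpr (ENNReal.ofReal_le_ofReal h))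
      have hnear : C * (e + δ/2) ^ d < C * e ^ d + ε := by
        refine hδ' ?_
        rw [Real.dist_eq]
        rw [add_sub_cancel_left]
        rw [abs_of_pos (by linarith)]
        linarith
      have hmono : C * K ^ d ≤ C * (e + δ/2) ^ d :=
        mul_le_mul_of_nonneg_left (pow_le_pow_left₀ hK.le hKe.le d) hC0
      calc psi1Norm μ S ≤ ENNReal.ofReal (C * K ^ d) := key K hK hKc
        _ ≤ ENNReal.ofReal (C * e ^ d + ε) :=
            ENNReal.ofReal_le_ofReal (by linarith)
        _ = ENNReal.ofReal (C * e ^ d) + ENNReal.ofReal (ε : ℝ) :=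
            ENNReal.ofReal_add (by positivity) hεR.le
        _ = ENNReal.ofReal (C * e ^ d) + (ε : ℝ≥0∞) := by
            rw [ENNReal.ofReal_coe_nnreal]
    refine ⟨lt_of_le_of_lt hle ?_, hle⟩
    rw [hrhs]
    exact ENNReal.ofReal_lt_top
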